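/- arXiv:2106.14431 — 10 statements merged into one kernel-verified Lean document; each statement's English description precedes it below -/
import Mathlib

section
/- For any vectors a, b, c, d, x, y in R^m and thresholds θ_x, θ_y ≥ 0, it is impossible that simultaneously: d((a+b)/2, x) ≤ θ_x, d((c+d)/2, x) ≤ θ_x, d((a+c)/2, x) > θ_x, d((b+d)/2, x) > θ_x, d((a+c)/2, y) ≤ θ_y, d((b+d)/2, y) ≤ θ_y, d((a+b)/2, y) > θ_y, and d((c+d)/2, y) > θ_y, where d is Euclidean distance. -/
lemma aux_par {E : Type*} [NormedAddCommGroup E] [InnerProductSpace ℝ E]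
    (u v u' v' : E) (h : u + v = u' + v') :
    ‖u‖^2 + ‖v‖^2 - ‖u'‖^2 - ‖v'‖^2 = (‖u - v‖^2 - ‖u' - v'‖^2)/2 := by
  have h1 := parallelogram_law_with_norm ℝ u v
  have h2 := parallelogram_law_with_norm ℝ u' v'
  rw [h] at h1
  nlinarith [h1, h2]

/-- The averaging + distance-based labelling embedding strategy cannot simulate
`K = {a∧b→x, c∧d→x, a∧c→y, b∧d→y}`. -/
theorem stmt_1 (m : ℕ) (a b c d x y : EuclideanSpace ℝ (Fin m))
    (θx θy : ℝ) (hθx : 0 ≤ θx) (hθy : 0 ≤ θy) :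
    ¬ (dist (((1:ℝ)/2) • (a + b)) x ≤ θx ∧
       dist (((1:ℝ)/2) • (c + d)) x ≤ θx ∧
       θx < dist (((1:ℝ)/2) • (a + c)) x ∧
       θx < dist (((1:ℝ)/2) • (b + d)) x ∧
       dist (((1:ℝ)/2) • (a + c)) y ≤ θy ∧
       dist (((1:ℝ)/2) • (b + d)) y ≤ θy ∧
       θy < dist (((1:ℝ)/2) • (a + b)) y ∧
       θy < dist (((1:ℝ)/2) • (c + d)) y) := by
  rintro ⟨h1, h2, h3, h4, h5, h6, h7, h8⟩
  set p := ((1:ℝ)/2) • (a + b)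
  set q := ((1:ℝ)/2) • (c + d)
  set r := ((1:ℝ)/2) • (a + c)
  set s := ((1:ℝ)/2) • (b + d)
  have hsum : p + q = r + s := by
    simp only [p, q, r, s, smul_add]
    abel
  have hx : (p - x) + (q - x) = (r - x) + (s - x) := by
    rw [sub_add_sub_comm, sub_add_sub_comm, hsum]
  have hy : (p - y) + (q - y) = (r - y) + (s - y) := by
    rw [sub_add_sub_comm, sub_add_sub_comm, hsum]
  have ex := aux_par (p - x) (q - x) (r - x) (s - x) hx
  have ey := aux_par (p - y) (q - y) (r - y) (s - y) hy
  have hd : ∀ u v : EuclideanSpace ℝ (Fin m), (u - x) - (v - x) = u - v := by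
    intro u v; abel
  have hd' : ∀ u v : EuclideanSpace ℝ (Fin m), (u - y) - (v - y) = u - v := by
    intro u v; abel
  rw [hd, hd] at ex
  rw [hd', hd'] at ey
  simp only [dist_eq_norm] at h1 h2 h3 h4 h5 h6 h7 h8
  have n1 : ‖p - x‖^2 ≤ θx^2 := pow_le_pow_left₀ (norm_nonneg _) h1 2
  have n2 : ‖q - x‖^2 ≤ θx^2 := pow_le_pow_left₀ (norm_nonneg _) h2 2
  have n3 : θx^2 < ‖r - x‖^2 := pow_lt_pow_left₀ h3 hθx (by norm_num)
  have n4 : θx^2 < ‖s - x‖^2 := pow_lt_pow_left₀ h4 hθx (by norm_num)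
  have n5 : ‖r - y‖^2 ≤ θy^2 := pow_le_pow_left₀ (norm_nonneg _) h5 2
  have n6 : ‖s - y‖^2 ≤ θy^2 := pow_le_pow_left₀ (norm_nonneg _) h6 2
  have n7 : θy^2 < ‖p - y‖^2 := pow_lt_pow_left₀ h7 hθy (by norm_num)
  have n8 : θy^2 < ‖q - y‖^2 := pow_lt_pow_left₀ h8 hθy (by norm_num)
  linarith
end

section
/- There do not exist nonzero vectors a, b, c, d, x, y in R^m and thresholds λ_x > 0, λ_y > 0 such that, writing n(u,v) = (u+v)/‖u+v‖ (assuming all pairwise sums among {a,b,c,d} are nonzero), the following all hold: n(a,b)·x ≥ λ_x, n(c,d)·x ≥ λ_x, n(a,c)·x < λ_x, n(b,d)·x < λ_x, n(a,d)·x < λ_x, n(b,c)·x < λ_x, and n(a,c)·y ≥ λ_y, n(b,d)·y ≥ λ_y, n(a,d)·y ≥ λ_y, n(b,c)·y ≥ λ_y, n(a,b)·y < λ_y, n(c,d)·y < λ_y. -/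
/-- Normalised sum of two vectors. -/
noncomputable def nsum {m : ℕ} (u v : EuclideanSpace ℝ (Fin m)) :
    EuclideanSpace ℝ (Fin m) := ‖u + v‖⁻¹ • (u + v)

lemma nsum_inner {m : ℕ} (u v w : EuclideanSpace ℝ (Fin m)) :
    (inner ℝ (nsum u v) w : ℝ) = ‖u + v‖⁻¹ * inner ℝ (u + v) w := by
  rw [nsum, real_inner_smul_left]

lemma le_nsum {m : ℕ} (u v w : EuclideanSpace ℝ (Fin m)) (l : ℝ)
    (huv : u + v ≠ 0) (h : l ≤ (inner ℝ (nsum u v) w : ℝ)) :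
    l * ‖u + v‖ ≤ inner ℝ (u + v) w := by
  have hn : (0:ℝ) < ‖u + v‖ := norm_pos_iff.mpr huv
  rw [nsum_inner] at h
  calc l * ‖u + v‖ ≤ (‖u + v‖⁻¹ * inner ℝ (u + v) w) * ‖u + v‖ := by
        exact mul_le_mul_of_nonneg_right h hn.le
    _ = inner ℝ (u + v) w := by field_simp
    
lemma nsum_lt {m : ℕ} (u v w : EuclideanSpace ℝ (Fin m)) (l : ℝ)
    (huv : u + v ≠ 0) (h : (inner ℝ (nsum u v) w : ℝ) < l) :
    (inner ℝ (u + v) w : ℝ) < l * ‖u + v‖ := by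
  have hn : (0:ℝ) < ‖u + v‖ := norm_pos_iff.mpr huv
  rw [nsum_inner] at h
  calc (inner ℝ (u + v) w : ℝ) = (‖u + v‖⁻¹ * inner ℝ (u + v) w) * ‖u + v‖ := by field_simp
    _ < l * ‖u + v‖ := by exact mul_lt_mul_of_pos_right h hn

/-- The normalised-average embedding with dot-product labelling cannot simulate
`K = {a∧b→x, c∧d→x, a∧c→y, b∧d→y, a∧d→y, b∧c→y}`. -/
theorem stmt_4 (m : ℕ) (a b c d x y : EuclideanSpace ℝ (Fin m)) (lx ly : ℝ)
    (ha : a ≠ 0) (hb : b ≠ 0) (hc : c ≠ 0) (hd : d ≠ 0) (hx : x ≠ 0) (hy : y ≠ 0)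
    (hab : a + b ≠ 0) (hac : a + c ≠ 0) (had : a + d ≠ 0)
    (hbc : b + c ≠ 0) (hbd : b + d ≠ 0) (hcd : c + d ≠ 0)
    (hlx : 0 < lx) (hly : 0 < ly) :
    ¬ ((lx ≤ inner ℝ (nsum a b) x ∧ lx ≤ inner ℝ (nsum c d) x ∧
        (inner ℝ (nsum a c) x : ℝ) < lx ∧ (inner ℝ (nsum b d) x : ℝ) < lx ∧
        (inner ℝ (nsum a d) x : ℝ) < lx ∧ (inner ℝ (nsum b c) x : ℝ) < lx) ∧
       (ly ≤ inner ℝ (nsum a c) y ∧ ly ≤ inner ℝ (nsum b d) y ∧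
        ly ≤ inner ℝ (nsum a d) y ∧ ly ≤ inner ℝ (nsum b c) y ∧
        (inner ℝ (nsum a b) y : ℝ) < ly ∧ (inner ℝ (nsum c d) y : ℝ) < ly)) := by
  rintro ⟨⟨h1, h2, h3, h4, -, -⟩, ⟨h7, h8, -, -, h11, h12⟩⟩
  have e1 := le_nsum a b x lx hab h1
  have e2 := le_nsum c d x lx hcd h2
  have e3 := nsum_lt a c x lx hac h3
  have e4 := nsum_lt b d x lx hbd h4
  have e7 := le_nsum a c y ly hac h7
  have e8 := le_nsum b d y ly hbd h8
  have e11 := nsum_lt a b y ly hab h11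
  have e12 := nsum_lt c d y ly hcd h12
  have key : ∀ w : EuclideanSpace ℝ (Fin m),
      (inner ℝ (a + b) w : ℝ) + inner ℝ (c + d) w = inner ℝ (a + c) w + inner ℝ (b + d) w := by
    intro w
    simp only [inner_add_left]
    ring
  have hkx := key x
  have hky := key y
  have hX : lx * (‖a + b‖ + ‖c + d‖) < lx * (‖a + c‖ + ‖b + d‖) := by nlinarith
  have hY : ly * (‖a + c‖ + ‖b + d‖) < ly * (‖a + b‖ + ‖c + d‖) := by nlinarith
  have hX' : ‖a + b‖ + ‖c + d‖ < ‖a + c‖ + ‖b + d‖ := (mul_lt_mul_iff_right₀ hlx).mp hX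
  have hY' : ‖a + c‖ + ‖b + d‖ < ‖a + b‖ + ‖c + d‖ := (mul_lt_mul_iff_right₀ hly).mp hY
  linarith
end

section
/- For every finite set A of propositional atoms and every propositional knowledge base K over A, there exist vectors (a ↦ v_a) ∈ R^{l+1} (where l = |mod(K)|) such that for all nonempty {a₁,…,aₙ} ⊆ A and all b ∈ A: ReLU((v_{a₁}+…+v_{aₙ})/n) · v_b ≥ 0 if and only if K ⊨ a₁∧…∧aₙ → b. -/
set_option maxHeartbeats 1000000


/-- Propositional formulas over a set of atoms `A`. -/
inductive PropForm (A : Type) : Type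
  | atom : A → PropForm A
  | fals : PropForm A
  | impl : PropForm A → PropForm A → PropForm A

/-- Truth value of a formula under an interpretation `ω`. -/
def PropForm.eval {A : Type} (ω : A → Bool) : PropForm A → Bool
  | .atom a => ω a
  | .fals => false
  | .impl φ ψ => !(φ.eval ω) || ψ.eval ω

/-- The set `mod(K)` of models of a propositional knowledge base `K`. -/
def models {A : Type} [Fintype A] [DecidableEq A] (K : Finset (PropForm A)) :
    Finset (A → Bool) :=
  Finset.univ.filter (fun ω => ∀ φ ∈ K, φ.eval ω = true)

/-- `K ⊨ a₁ ∧ ... ∧ aₙ → b`, where the `aᵢ` are the elements of `S`. -/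
def entails {A : Type} [Fintype A] [DecidableEq A] (K : Finset (PropForm A))
    (S : Finset A) (b : A) : Prop :=
  ∀ ω ∈ models K, (∀ a ∈ S, ω a = true) → ω b = true


private lemma sum_fin_models_eq {A : Type} [Fintype A] [DecidableEq A]
    (s : Finset (A → Bool)) (G : (A → Bool) → ℝ)
    (e : {ω // ω ∈ s} ≃ Fin s.card) :
    ∑ i : Fin s.card, G (e.symm i) = ∑ ω ∈ s, G ω := by
  rw [← Finset.sum_coe_sort s G]
  exact Equiv.sum_comp e.symm (fun x => G x)

/-- For every propositional knowledge base `K` over a finite atom set `A`, there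
exist attribute vectors in `ℝ^{l+1}` (`l = |mod(K)|`) such that the ReLU-based
labelling of the average embedding captures exactly the rules entailed by `K`. -/
theorem stmt_6 {A : Type} [Fintype A] [DecidableEq A] (K : Finset (PropForm A)) :
    ∃ v : A → Fin ((models K).card + 1) → ℝ,
      ∀ S : Finset A, S.Nonempty → ∀ b : A,
        (0 ≤ ∑ i, max ((S.card : ℝ)⁻¹ * ∑ a ∈ S, v a i) 0 * v b i) ↔
          entails K S b := by
  classical
  set l := (models K).card with hl
  set δ : ℝ := (l : ℝ) + (Fintype.card A : ℝ) + 2 with hδ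
  set w : (A → Bool) → A → ℝ := fun ω a => if ω a then 1 else -δ with hw
  have e : {ω // ω ∈ models K} ≃ Fin l := (models K).equivFin
  refine ⟨fun a i => if h : (i : ℕ) < l then w (e.symm ⟨i, h⟩) a else 1, ?_⟩
  intro S hS b
  have hn : 0 < (S.card : ℝ) := by exact_mod_cast Finset.card_pos.mpr hS
  have hnA : (S.card : ℝ) ≤ (Fintype.card A : ℝ) := by
    exact_mod_cast Finset.card_le_univ S
  have hl0 : (0:ℝ) ≤ (l : ℝ) := Nat.cast_nonneg _
  have hA0 : (0:ℝ) ≤ (Fintype.card A : ℝ) := Nat.cast_nonneg _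
  have hwle : ∀ ω a, w ω a ≤ 1 := by
    intro ω a
    show (if ω a then (1:ℝ) else -δ) ≤ 1
    split
    · exact le_refl 1
    · nlinarith
  have key : ∀ ω : A → Bool,
      max ((S.card : ℝ)⁻¹ * ∑ a ∈ S, w ω a) 0 * w ω b
        = if ∀ a ∈ S, ω a = true then w ω b else 0 := by
    intro ω
    by_cases h : ∀ a ∈ S, ω a = true
    · rw [if_pos h]
      have hsum : ∑ a ∈ S, w ω a = (S.card : ℝ) := by
        rw [Finset.sum_congr rfl (fun a ha => show w ω a = 1 by
          show (if ω a then (1:ℝ) else -δ) = 1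
          rw [if_pos (h a ha)])]
        simp
      rw [hsum, inv_mul_cancel₀ hn.ne']
      simp
    · rw [if_neg h]
      push_neg at h
      obtain ⟨a₀, ha₀, ha₀f⟩ := h
      have hsum : ∑ a ∈ S, w ω a ≤ 0 := by
        have h1 : ∑ a ∈ S, w ω a = w ω a₀ + ∑ a ∈ S.erase a₀, w ω a := by
          rw [Finset.add_sum_erase S _ ha₀]
        have h2 : ∑ a ∈ S.erase a₀, w ω a ≤ (S.erase a₀).card • (1 : ℝ) :=
          Finset.sum_le_card_nsmul _ _ 1 (fun a _ => hwle ω a)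
        have h3 : w ω a₀ = -δ := by
          show (if ω a₀ then (1:ℝ) else -δ) = -δ
          rw [if_neg (by simp [ha₀f])]
        have h4 : ((S.erase a₀).card : ℝ) ≤ (Fintype.card A : ℝ) := by
          exact_mod_cast Finset.card_le_univ _
        rw [h1, h3]
        simp only [nsmul_eq_mul, mul_one] at h2
        nlinarith
      have hm : max ((S.card : ℝ)⁻¹ * ∑ a ∈ S, w ω a) 0 = 0 :=
        max_eq_right (mul_nonpos_of_nonneg_of_nonpos (by positivity) hsum)
      rw [hm, zero_mul]
  set v : A → Fin (l + 1) → ℝ :=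
    fun a i => if h : (i : ℕ) < l then w (e.symm ⟨i, h⟩) a else 1 with hv
  have hvcast : ∀ (a : A) (i : Fin l), v a i.castSucc = w (e.symm i) a := by
    intro a i
    have h : ((i.castSucc : Fin (l+1)) : ℕ) < l := by simpa using i.isLt
    show (if h : ((i.castSucc : Fin (l+1)) : ℕ) < l then w (e.symm ⟨_, h⟩) a else 1)
        = w (e.symm i) a
    rw [dif_pos h]
    have : (⟨((i.castSucc : Fin (l+1)) : ℕ), h⟩ : Fin l) = i := by
      ext; simp
    rw [this]
  have hvlast : ∀ a : A, v a (Fin.last l) = 1 := by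
    intro a
    show (if h : ((Fin.last l : Fin (l+1)) : ℕ) < l then w (e.symm ⟨_, h⟩) a else 1) = 1
    rw [dif_neg (by simp)]
  have hT : ∑ i, max ((S.card : ℝ)⁻¹ * ∑ a ∈ S, v a i) 0 * v b i
      = (∑ ω ∈ (models K).filter (fun ω => ∀ a ∈ S, ω a = true), w ω b) + 1 := by
    rw [Fin.sum_univ_castSucc]
    have hsumlast : ∑ a ∈ S, v a (Fin.last l) = (S.card : ℝ) := by
      rw [Finset.sum_congr rfl (fun a _ => hvlast a)]
      simp
    rw [hsumlast, hvlast, inv_mul_cancel₀ hn.ne', mul_one, max_eq_left zero_le_one]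
    congr 1
    calc ∑ i : Fin l, max ((S.card : ℝ)⁻¹ * ∑ a ∈ S, v a i.castSucc) 0 * v b i.castSucc
        = ∑ i : Fin l,
            (if ∀ a ∈ S, (e.symm i : A → Bool) a = true then w (e.symm i) b else 0) := by
          refine Finset.sum_congr rfl (fun i _ => ?_)
          rw [Finset.sum_congr rfl (fun a _ => hvcast a i), hvcast b i]
          exact key _
      _ = ∑ ω ∈ models K, (if ∀ a ∈ S, ω a = true then w ω b else 0) :=
          sum_fin_models_eq (models K) (fun ω => if ∀ a ∈ S, ω a = true then w ω b else 0) e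
      _ = ∑ ω ∈ (models K).filter (fun ω => ∀ a ∈ S, ω a = true), w ω b :=
          (Finset.sum_filter _ _).symm
  rw [hT]
  constructor
  · intro hpos ω hω hωS
    by_contra hb
    have hωmem : ω ∈ (models K).filter (fun ω => ∀ a ∈ S, ω a = true) :=
      Finset.mem_filter.mpr ⟨hω, hωS⟩
    have hwb : w ω b = -δ := by
      show (if ω b then (1:ℝ) else -δ) = -δ
      rw [if_neg (by simpa using hb)]
    have hsum : ∑ ω' ∈ (models K).filter (fun ω => ∀ a ∈ S, ω a = true), w ω' b
        ≤ -δ + ((models K).filter (fun ω => ∀ a ∈ S, ω a = true)).card := by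
      rw [← Finset.add_sum_erase _ _ hωmem, hwb]
      have h2 : ∑ ω' ∈ ((models K).filter (fun ω => ∀ a ∈ S, ω a = true)).erase ω, w ω' b
          ≤ (((models K).filter (fun ω => ∀ a ∈ S, ω a = true)).erase ω).card • (1:ℝ) :=
        Finset.sum_le_card_nsmul _ _ 1 (fun x _ => hwle x b)
      simp only [nsmul_eq_mul, mul_one] at h2
      have h3 : ((((models K).filter (fun ω => ∀ a ∈ S, ω a = true)).erase ω).card : ℝ)
          ≤ (((models K).filter (fun ω => ∀ a ∈ S, ω a = true)).card : ℝ) := by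
        exact_mod_cast Finset.card_le_card (Finset.erase_subset _ _)
      linarith
    have hcard : ((((models K).filter (fun ω => ∀ a ∈ S, ω a = true))).card : ℝ)
        ≤ (l : ℝ) := by
      exact_mod_cast Finset.card_le_card (Finset.filter_subset _ _)
    nlinarith
  · intro hent
    have : (0:ℝ) ≤ ∑ ω ∈ (models K).filter (fun ω => ∀ a ∈ S, ω a = true), w ω b := by
      refine Finset.sum_nonneg (fun ω hω => ?_)
      obtain ⟨hω1, hω2⟩ := Finset.mem_filter.mp hω
      have := hent ω hω1 hω2
      show (0:ℝ) ≤ if ω b then (1:ℝ) else -δ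
      rw [if_pos this]
      exact zero_le_one
    linarith
end

section
/- Fix a propositional knowledge base K with models ω₁,…,ω_l over atoms A, and δ > 2^{|A|}. Define v_a ∈ R^{l+1} by (v_a)ᵢ = 1 if ωᵢ ⊨ a, (v_a)ᵢ = −δ otherwise (i ≤ l), and (v_a)_{l+1} = 1. Then for any atoms a₁,…,aₙ, the vector e = (v_{a₁}+…+v_{aₙ})/n satisfies: eᵢ = 1 if ωᵢ ⊨ {a₁,…,aₙ} and eᵢ < 0 otherwise (for i ≤ l). -/
/-- Key lemma of the ReLU-based simulation: with `(v_a)ᵢ = 1` if `ωᵢ ⊨ a`, `-δ`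
otherwise (`δ > 2^{|A|}`), and last coordinate `1`, the average
`e = (v_{a₁}+...+v_{aₙ})/n` satisfies `eᵢ = 1` if `ωᵢ ⊨ {a₁,...,aₙ}` and
`eᵢ < 0` otherwise. -/
theorem stmt_7 {A : Type} [Fintype A] [DecidableEq A] (K : Finset (PropForm A))
    (δ : ℝ) (hδ : (2:ℝ) ^ (Fintype.card A) < δ)
    (ms : Fin (models K).card ≃ {ω : A → Bool // ω ∈ models K})
    (v : A → Fin ((models K).card + 1) → ℝ)
    (hv : ∀ a (i : Fin ((models K).card + 1)),
      v a i = if h : (i : ℕ) < (models K).card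
        then (if (ms ⟨i, h⟩).1 a then 1 else -δ) else 1)
    (S : Finset A) (hS : S.Nonempty) :
    ∀ (i : Fin ((models K).card + 1)) (h : (i : ℕ) < (models K).card),
      ((∀ a ∈ S, (ms ⟨i, h⟩).1 a = true) →
          (S.card : ℝ)⁻¹ * ∑ a ∈ S, v a i = 1) ∧
      ((¬ ∀ a ∈ S, (ms ⟨i, h⟩).1 a = true) →
          (S.card : ℝ)⁻¹ * ∑ a ∈ S, v a i < 0) := by
  intro i h
  have hδ0 : (0:ℝ) < δ := lt_trans (by positivity) hδ
  have hcard : (0:ℝ) < (S.card : ℝ) := by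
    exact_mod_cast Finset.card_pos.mpr hS
  constructor
  · intro hall
    have : ∑ a ∈ S, v a i = (S.card : ℝ) := by
      rw [Finset.sum_congr rfl (fun a ha => by
        rw [hv a i, dif_pos h, if_pos (hall a ha)])]
      simp
    rw [this]
    field_simp
  · intro hne
    push_neg at hne
    obtain ⟨a₀, ha₀S, ha₀⟩ := hne
    have hsum : ∑ a ∈ S, v a i ≤ -δ + ((S.card : ℝ) - 1) := by
      rw [← Finset.add_sum_erase _ _ ha₀S]
      have h1 : v a₀ i = -δ := by
        rw [hv a₀ i]; simp [h, ha₀]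
      have h2 : ∑ a ∈ S.erase a₀, v a i ≤ (S.card : ℝ) - 1 := by
        calc ∑ a ∈ S.erase a₀, v a i ≤ ∑ _a ∈ S.erase a₀, (1:ℝ) := by
              apply Finset.sum_le_sum
              intro a _
              rw [hv a i]
              split_ifs <;> linarith
          _ = ((S.erase a₀).card : ℝ) := by simp
          _ = (S.card : ℝ) - 1 := by
              rw [Finset.card_erase_of_mem ha₀S]
              have h1 : 1 ≤ S.card := Finset.card_pos.mpr hS
              rw [Nat.cast_sub h1, Nat.cast_one]
      linarith
    have hSA : (S.card : ℝ) ≤ (2:ℝ) ^ (Fintype.card A) := by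
      have h1 : S.card ≤ Fintype.card A := Finset.card_le_card (Finset.subset_univ S) |>.trans (by simp)
      have h2 : Fintype.card A ≤ 2 ^ (Fintype.card A) := (Nat.lt_two_pow_self (n := Fintype.card A)) |>.le
      exact_mod_cast h1.trans h2
    have : ∑ a ∈ S, v a i < 0 := by linarith
    exact mul_neg_of_pos_of_neg (by positivity) this
end

section
/- For every finite set A of propositional atoms and every propositional knowledge base K over A, there exist two families of vectors (a ↦ v_a) and (a ↦ w_a) in R^{l+1} (where l = |mod(K)|) such that for all nonempty {a₁,…,aₙ} ⊆ A and all b ∈ A: (v_{a₁} ⊙ … ⊙ v_{aₙ}) · w_b ≥ 0 if and only if K ⊨ a₁∧…∧aₙ → b, where ⊙ is the componentwise (Hadamard) product. -/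
/-- Hadamard-product embeddings with dot-product labelling can simulate any
propositional knowledge base `K`: there exist two families of vectors in
`ℝ^{l+1}` (`l = |mod(K)|`) such that `(v_{a₁} ⊙ ... ⊙ v_{aₙ}) · w_b ≥ 0` iff
`K ⊨ a₁∧...∧aₙ → b`. -/
theorem stmt_8 {A : Type} [Fintype A] [DecidableEq A] (K : Finset (PropForm A)) :
    ∃ (v w : A → Fin ((models K).card + 1) → ℝ),
      ∀ S : Finset A, S.Nonempty → ∀ b : A,
        (0 ≤ ∑ i, (∏ a ∈ S, v a i) * w b i) ↔ entails K S b := by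
  classical
  set l := (models K).card with hl
  let f : Fin l → (A → Bool) := fun i => ((models K).equivFin.symm i : A → Bool)
  have hfmem : ∀ i, f i ∈ models K := fun i => ((models K).equivFin.symm i).2
  have hfsurj : ∀ ω ∈ models K, ∃ i, f i = ω := by
    intro ω hω
    exact ⟨(models K).equivFin ⟨ω, hω⟩, by simp [f]⟩
  refine ⟨fun a i => if h : (i : ℕ) < l then (if f ⟨i, h⟩ a then 1 else 0) else 1,
          fun b i => if h : (i : ℕ) < l then (if f ⟨i, h⟩ b then 1 else -(l + 2)) else 1,
          ?_⟩
  intro S hS b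
  rw [Fin.sum_univ_castSucc]
  have hlast : ((Fin.last l : Fin (l + 1)) : ℕ) < l → False := by simp
  have hlastterm :
      (∏ a ∈ S, (if h : ((Fin.last l : Fin (l+1)) : ℕ) < l then
          (if f ⟨(Fin.last l : Fin (l+1)), h⟩ a then (1:ℝ) else 0) else 1)) *
        (if h : ((Fin.last l : Fin (l+1)) : ℕ) < l then
          (if f ⟨(Fin.last l : Fin (l+1)), h⟩ b then (1:ℝ) else -(l + 2)) else 1) = 1 := by
    simp
  rw [hlastterm]
  have hcast : ∀ (i : Fin l), ((i.castSucc : Fin (l+1)) : ℕ) < l := fun i => i.2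
  have hterm : ∀ i : Fin l,
      (∏ a ∈ S, (if h : ((i.castSucc : Fin (l+1)) : ℕ) < l then
          (if f ⟨(i.castSucc : Fin (l+1)), h⟩ a then (1:ℝ) else 0) else 1)) *
        (if h : ((i.castSucc : Fin (l+1)) : ℕ) < l then
          (if f ⟨(i.castSucc : Fin (l+1)), h⟩ b then (1:ℝ) else -(l + 2)) else 1)
      = (if (∀ a ∈ S, f i a = true) then (1:ℝ) else 0) *
          (if f i b then (1:ℝ) else -(l + 2)) := by
    intro i
    have hi : (⟨((i.castSucc : Fin (l+1)) : ℕ), hcast i⟩ : Fin l) = i := by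
      ext; simp
    simp only [dif_pos (hcast i), hi]
    congr 1
    by_cases h : ∀ a ∈ S, f i a = true
    · rw [if_pos h]
      exact Finset.prod_eq_one fun a ha => by rw [if_pos (h a ha)]
    · rw [if_neg h]
      push_neg at h
      obtain ⟨a, ha, hfa⟩ := h
      exact Finset.prod_eq_zero ha (by simp [hfa])
  rw [Finset.sum_congr rfl fun i _ => hterm i]
  constructor
  · intro hsum
    by_contra hent
    unfold entails at hent
    push_neg at hent
    obtain ⟨ω, hω, hωS, hωb⟩ := hent
    obtain ⟨i₀, hi₀⟩ := hfsurj ω hω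
    have hterm0 : (if (∀ a ∈ S, f i₀ a = true) then (1:ℝ) else 0) *
        (if f i₀ b then (1:ℝ) else -(l + 2)) = -(l + 2) := by
      rw [hi₀, if_pos hωS, if_neg (by simp [hωb]), one_mul]
    have hone : ∀ i : Fin l, (if (∀ a ∈ S, f i a = true) then (1:ℝ) else 0) *
        (if f i b then (1:ℝ) else -(l + 2)) ≤ 1 := by
      intro i
      by_cases h1 : ∀ a ∈ S, f i a = true
      · rw [if_pos h1, one_mul]
        by_cases h2 : f i b = true
        · rw [if_pos h2]
        · rw [if_neg h2]; nlinarith [Nat.cast_nonneg (α := ℝ) l]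
      · rw [if_neg h1, zero_mul]; norm_num
    have hsplit := Finset.add_sum_erase Finset.univ
      (fun i : Fin l => (if (∀ a ∈ S, f i a = true) then (1:ℝ) else 0) *
        (if f i b then (1:ℝ) else -(l + 2))) (Finset.mem_univ i₀)
    have herase : ∑ i ∈ Finset.univ.erase i₀,
        (if (∀ a ∈ S, f i a = true) then (1:ℝ) else 0) *
        (if f i b then (1:ℝ) else -(l + 2)) ≤ (Finset.univ.erase i₀).card := by
      calc _ ≤ (Finset.univ.erase i₀).card • (1:ℝ) :=
            Finset.sum_le_card_nsmul _ _ 1 (fun i _ => hone i)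
        _ = _ := by simp
    have hcard : ((Finset.univ.erase i₀).card : ℝ) ≤ l := by
      have h := Finset.card_erase_le (s := (Finset.univ : Finset (Fin l))) (a := i₀)
      have h2 : (Finset.univ.erase i₀).card ≤ l := by simp
      exact_mod_cast h2
    rw [← hsplit] at hsum
    linarith
  · intro hent
    have : ∀ i : Fin l, (0:ℝ) ≤ (if (∀ a ∈ S, f i a = true) then (1:ℝ) else 0) *
        (if f i b then (1:ℝ) else -(l + 2)) := by
      intro i
      by_cases h1 : ∀ a ∈ S, f i a = true
      · rw [if_pos h1, one_mul, if_pos (hent (f i) (hfmem i) h1)]; norm_num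
      · rw [if_neg h1, zero_mul]
    have h2 : (0:ℝ) ≤ ∑ i : Fin l, (if (∀ a ∈ S, f i a = true) then (1:ℝ) else 0) *
        (if f i b then (1:ℝ) else -(l + 2)) := Finset.sum_nonneg fun i _ => this i
    linarith
end

section
/- For every finite set A of propositional atoms and every propositional knowledge base K over A, there exist vectors (a ↦ v_a) ∈ R^l (l = |mod(K)|, assuming K consistent; dimension may be arbitrary if K is inconsistent) such that for all nonempty {a₁,…,aₙ} ⊆ A and all b ∈ A: v_b ⪯ max(v_{a₁},…,v_{aₙ}) if and only if K ⊨ a₁∧…∧aₙ → b, where max is componentwise and ⪯ is the componentwise (product) order. -/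
/-- Order embeddings can simulate any propositional knowledge base `K`: there
exist vectors (in `ℝ^l` with `l = |mod(K)|` when `K` is consistent, of arbitrary
dimension otherwise) such that `v_b ⪯ max(v_{a₁},...,v_{aₙ})` iff
`K ⊨ a₁∧...∧aₙ → b`. -/
theorem stmt_10 {A : Type} [Fintype A] [DecidableEq A] (K : Finset (PropForm A)) :
    ∃ (mdim : ℕ) (v : A → Fin mdim → ℝ),
      ((models K).Nonempty → mdim = (models K).card) ∧
      ∀ (S : Finset A) (hS : S.Nonempty), ∀ b : A,
        (∀ i, v b i ≤ S.sup' hS (fun a => v a i)) ↔ entails K S b := by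
  classical
  let e := (models K).equivFin
  refine ⟨(models K).card, fun a i => if ((e.symm i : A → Bool) a) then 0 else 1,
    fun _ => rfl, ?_⟩
  intro S hS b
  constructor
  · intro h ω hω ha
    have hi := h (e ⟨ω, hω⟩)
    simp only [Equiv.symm_apply_apply] at hi
    have hsup : S.sup' hS (fun a =>
        (if ((⟨ω, hω⟩ : models K) : A → Bool) a then (0:ℝ) else 1)) ≤ 0 := by
      apply Finset.sup'_le
      intro a haS
      simp [ha a haS]
    have hb := le_trans hi hsup
    by_contra hb'
    simp only [Bool.not_eq_true] at hb'
    simp [hb'] at hb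
    linarith
  · intro hent i
    set ω : A → Bool := (e.symm i : A → Bool) with hw
    by_cases hall : ∀ a ∈ S, ω a = true
    · have hb := hent ω (e.symm i).2 hall
      obtain ⟨a, haS⟩ := hS
      calc (if ω b then (0:ℝ) else 1) = 0 := by simp [hb]
        _ ≤ (if ω a then (0:ℝ) else 1) := by positivity
        _ ≤ _ := by exact Finset.le_sup' (fun a => if ω a then (0:ℝ) else 1) haS
    · push_neg at hall
      obtain ⟨a, haS, ha⟩ := hall
      simp only [Bool.not_eq_true] at ha
      calc (if ω b then (0:ℝ) else 1) ≤ 1 := by split <;> norm_num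
        _ = (if ω a then (0:ℝ) else 1) := by simp [ha]
        _ ≤ _ := by exact Finset.le_sup' (fun a => if ω a then (0:ℝ) else 1) haS
end

section
/- With the order-embedding construction (v_a)ᵢ = 0 if ωᵢ ⊨ a else 1, one has v_b ⪯ max(v_{a₁},…,v_{aₙ}) if and only if every model ωᵢ of K satisfying {a₁,…,aₙ} also satisfies b. -/
/-- Core equivalence of the order-embedding construction: with `(v_a)ᵢ = 0` if
`ωᵢ ⊨ a` and `1` otherwise, `v_b ⪯ max(v_{a₁},...,v_{aₙ})` iff every model `ωᵢ`
of `K` satisfying `{a₁,...,aₙ}` also satisfies `b`. -/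
theorem stmt_11 {A : Type} [Fintype A] [DecidableEq A] (K : Finset (PropForm A))
    (ms : Fin (models K).card ≃ {ω : A → Bool // ω ∈ models K})
    (v : A → Fin ((models K).card) → ℝ)
    (hv : ∀ a i, v a i = if (ms i).1 a then 0 else 1)
    (S : Finset A) (hS : S.Nonempty) (b : A) :
    (∀ i, v b i ≤ S.sup' hS (fun a => v a i)) ↔
      (∀ i, (∀ a ∈ S, (ms i).1 a = true) → (ms i).1 b = true) := by
  constructor
  · intro h i hall
    have hsup : S.sup' hS (fun a => v a i) = 0 := by
      apply le_antisymm
      · apply Finset.sup'_le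
        intro a ha
        rw [hv, hall a ha]; simp
      · obtain ⟨a, ha⟩ := hS
        calc (0:ℝ) = v a i := by rw [hv, hall a ha]; simp
          _ ≤ _ := Finset.le_sup' (fun a => v a i) ha
    have := h i
    rw [hsup, hv] at this
    by_contra hb
    simp [hb] at this
    linarith
  · intro h i
    by_cases hall : ∀ a ∈ S, (ms i).1 a = true
    · have hb := h i hall
      rw [hv, hb]
      obtain ⟨a, ha⟩ := hS
      calc (if true = true then (0:ℝ) else 1) = v a i := by rw [hv, hall a ha]
        _ ≤ _ := Finset.le_sup' (fun a => v a i) ha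
    · push_neg at hall
      obtain ⟨a, ha, hfa⟩ := hall
      have h1 : v a i = 1 := by rw [hv]; simp [hfa]
      calc v b i ≤ 1 := by rw [hv]; split <;> norm_num
        _ = v a i := h1.symm
        _ ≤ _ := Finset.le_sup' (fun a => v a i) ha
end

section
/- For every stratified knowledge base Θ = (α₁,…,α_k) over a finite atom set A, there exist vectors (a ↦ v_a) ∈ R^l (l = number of all interpretations over A) such that for all nonempty {a₁,…,aₙ} ⊆ A and all b ∈ A: ReLU((v_{a₁}+…+v_{aₙ})/n) · v_b ≥ 0 if and only if Θ ⊨ a₁∧…∧aₙ ▷ b. -/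
/-- Ranked (default) entailment `Θ ⊨ a₁∧...∧aₙ ▷ b` for a stratified knowledge
base `Θ = (α₁,...,α_k)`: for some `i`, `α₁∧...∧αᵢ∧a₁∧...∧aₙ ⊨ b` and
`α₁∧...∧αᵢ∧a₁∧...∧aₙ ⊭ ¬b`. -/
def rankedEntails {A : Type} (Θ : List (PropForm A)) (S : Finset A) (b : A) : Prop :=
  ∃ i : ℕ,
    (∀ ω : A → Bool, (∀ φ ∈ Θ.take i, φ.eval ω = true) →
        (∀ a ∈ S, ω a = true) → ω b = true) ∧
    (∃ ω : A → Bool, (∀ φ ∈ Θ.take i, φ.eval ω = true) ∧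
        (∀ a ∈ S, ω a = true) ∧ ω b = true)

namespace Stmt13Aux

/-- Rank of an interpretation: the length of the longest prefix of `Θ` it satisfies. -/
def mu {A : Type} (Θ : List (PropForm A)) (ω : A → Bool) : ℕ :=
  (Θ.takeWhile (fun φ => φ.eval ω)).length

lemma mu_le_length {A : Type} (Θ : List (PropForm A)) (ω : A → Bool) :
    mu Θ ω ≤ Θ.length :=
  (Θ.takeWhile_prefix _).length_le

lemma sat_iff {A : Type} (Θ : List (PropForm A)) (ω : A → Bool) (i : ℕ) :
    (∀ φ ∈ Θ.take i, φ.eval ω = true) ↔ min i Θ.length ≤ mu Θ ω := by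
  induction Θ generalizing i with
  | nil => simp [mu]
  | cons φ Θ ih =>
    cases i with
    | zero => simp
    | succ i =>
      by_cases h : φ.eval ω = true
      · have hmu : mu (φ :: Θ) ω = mu Θ ω + 1 := by
          simp [mu, List.takeWhile_cons, h]
        simp only [List.take_succ_cons, List.mem_cons, forall_eq_or_imp, h, true_and,
          hmu, List.length_cons]
        rw [ih i]
        omega
      · have hmu : mu (φ :: Θ) ω = 0 := by
          simp [mu, List.takeWhile_cons, h]
        simp [List.take_succ_cons, h, hmu, List.length_cons, Nat.succ_min_succ]

end Stmt13Aux

open Stmt13Aux in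
/-- ReLU-based averaging embeddings can simulate ranked non-monotonic
entailment: vectors indexed by the `l = 2^{|A|}` interpretations over `A`
exist such that `ReLU((v_{a₁}+...+v_{aₙ})/n) · v_b ≥ 0` iff
`Θ ⊨ a₁∧...∧aₙ ▷ b`. -/
theorem stmt_13 {A : Type} [Fintype A] [DecidableEq A] (Θ : List (PropForm A)) :
    ∃ v : A → (A → Bool) → ℝ,
      ∀ S : Finset A, S.Nonempty → ∀ b : A,
        (0 ≤ ∑ ω : A → Bool, max ((S.card : ℝ)⁻¹ * ∑ a ∈ S, v a ω) 0 * v b ω) ↔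
          rankedEntails Θ S b := by
  classical
  set N : ℕ := Fintype.card (A → Bool) with hNdef
  set δ : ℝ := (N : ℝ) + (Fintype.card A : ℝ) + 2 with hδdef
  have hn0 : (0:ℝ) ≤ (N : ℝ) := Nat.cast_nonneg N
  have ha0 : (0:ℝ) ≤ (Fintype.card A : ℝ) := Nat.cast_nonneg _
  have hδ1 : (1 : ℝ) ≤ δ := by rw [hδdef]; linarith
  have hδ0 : (0 : ℝ) < δ := by linarith
  have hNδ : (N : ℝ) < δ := by rw [hδdef]; linarith
  have hAδ : (Fintype.card A : ℝ) < δ := by rw [hδdef]; linarith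
  refine ⟨fun a ω => if ω a then δ ^ (2 * mu Θ ω) else -δ ^ (2 * mu Θ ω + 1), ?_⟩
  intro S hS b
  have hcard0 : (0 : ℝ) < (S.card : ℝ) := by
    exact_mod_cast Finset.card_pos.mpr hS
  -- Step 1: compute the ReLU of the average
  have relu : ∀ ω : A → Bool,
      max ((S.card : ℝ)⁻¹ *
        ∑ a ∈ S, (if ω a then δ ^ (2 * mu Θ ω) else -δ ^ (2 * mu Θ ω + 1))) 0
        = if (∀ a ∈ S, ω a = true) then δ ^ (2 * mu Θ ω) else 0 := by
    intro ω
    by_cases h : ∀ a ∈ S, ω a = true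
    · rw [if_pos h]
      have hsum : ∑ a ∈ S, (if ω a then δ ^ (2 * mu Θ ω) else -δ ^ (2 * mu Θ ω + 1))
          = (S.card : ℝ) * δ ^ (2 * mu Θ ω) := by
        rw [Finset.sum_congr rfl (fun a ha => if_pos (h a ha))]
        simp [nsmul_eq_mul]
      rw [hsum, inv_mul_cancel_left₀ (ne_of_gt hcard0)]
      exact max_eq_left (by positivity)
    · rw [if_neg h]
      push_neg at h
      obtain ⟨a₀, ha₀S, ha₀⟩ := h
      have ha₀' : ω a₀ = false := by simpa using ha₀
      have hrest : ∑ a ∈ S.erase a₀,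
          (if ω a then δ ^ (2 * mu Θ ω) else -δ ^ (2 * mu Θ ω + 1))
          ≤ ((S.erase a₀).card : ℝ) * δ ^ (2 * mu Θ ω) := by
        have hterm : ∀ a ∈ S.erase a₀,
            (if ω a then δ ^ (2 * mu Θ ω) else -δ ^ (2 * mu Θ ω + 1))
              ≤ δ ^ (2 * mu Θ ω) := by
          intro a _
          split
          · exact le_rfl
          · have h1 : (0:ℝ) ≤ δ ^ (2 * mu Θ ω + 1) := by positivity
            have h2 : (0:ℝ) ≤ δ ^ (2 * mu Θ ω) := by positivity
            linarith
        have := Finset.sum_le_card_nsmul (S.erase a₀)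
          (fun a => if ω a then δ ^ (2 * mu Θ ω) else -δ ^ (2 * mu Θ ω + 1))
          (δ ^ (2 * mu Θ ω)) hterm
        simpa [nsmul_eq_mul] using this
      have hcardA : ((S.erase a₀).card : ℝ) < δ := by
        have h1 : (S.erase a₀).card ≤ Fintype.card A :=
          le_trans (Finset.card_le_card (Finset.erase_subset _ _))
            (Finset.card_le_univ S)
        calc ((S.erase a₀).card : ℝ) ≤ (Fintype.card A : ℝ) := by exact_mod_cast h1
          _ < δ := hAδ
      have hneg : ∑ a ∈ S, (if ω a then δ ^ (2 * mu Θ ω) else -δ ^ (2 * mu Θ ω + 1)) < 0 := by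
        rw [← Finset.add_sum_erase _ _ ha₀S, ha₀']
        have hpow : δ ^ (2 * mu Θ ω + 1) = δ ^ (2 * mu Θ ω) * δ := by ring
        have hpos : (0:ℝ) < δ ^ (2 * mu Θ ω) := by positivity
        simp only [Bool.false_eq_true, if_false]
        nlinarith [hrest]
      have hlt : (S.card : ℝ)⁻¹ *
          ∑ a ∈ S, (if ω a then δ ^ (2 * mu Θ ω) else -δ ^ (2 * mu Θ ω + 1)) < 0 :=
        mul_neg_of_pos_of_neg (inv_pos.mpr hcard0) hneg
      exact max_eq_right hlt.le
  simp only [relu]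
  -- Step 2: reduce the big sum to a sum over models of S
  set T : Finset (A → Bool) := Finset.univ.filter (fun ω => ∀ a ∈ S, ω a = true) with hT
  have hmemT : ∀ ω : A → Bool, ω ∈ T ↔ ∀ a ∈ S, ω a = true := by
    intro ω; simp [hT]
  have hTne : T.Nonempty := ⟨fun _ => true, (hmemT _).mpr (fun _ _ => rfl)⟩
  have step : ∀ ω : A → Bool,
      (if (∀ a ∈ S, ω a = true) then δ ^ (2 * mu Θ ω) else 0) *
        (if ω b then δ ^ (2 * mu Θ ω) else -δ ^ (2 * mu Θ ω + 1))
      = if (∀ a ∈ S, ω a = true) then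
          (if ω b then δ ^ (4 * mu Θ ω) else -δ ^ (4 * mu Θ ω + 1)) else 0 := by
    intro ω
    by_cases hc : ∀ a ∈ S, ω a = true
    · rw [if_pos hc, if_pos hc]
      by_cases hb : ω b = true
      · rw [if_pos hb, if_pos hb, ← pow_add]
        have : 2 * mu Θ ω + 2 * mu Θ ω = 4 * mu Θ ω := by ring
        rw [this]
      · rw [if_neg hb, if_neg hb, mul_neg, ← pow_add]
        have : 2 * mu Θ ω + (2 * mu Θ ω + 1) = 4 * mu Θ ω + 1 := by ring
        rw [this]
    · rw [if_neg hc, if_neg hc, zero_mul]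
  have hsum1 : ∑ ω : A → Bool,
      (if (∀ a ∈ S, ω a = true) then δ ^ (2 * mu Θ ω) else 0) *
        (if ω b then δ ^ (2 * mu Θ ω) else -δ ^ (2 * mu Θ ω + 1))
      = ∑ ω ∈ T, (if ω b then δ ^ (4 * mu Θ ω) else -δ ^ (4 * mu Θ ω + 1)) := by
    rw [Finset.sum_congr rfl (fun ω _ => step ω), hT, Finset.sum_filter]
  rw [hsum1]
  set Tb : Finset (A → Bool) := T.filter (fun ω => ω b = true) with hTb
  set Tn : Finset (A → Bool) := T.filter (fun ω => ¬ ω b = true) with hTn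
  have hsplit : ∑ ω ∈ T, (if ω b then δ ^ (4 * mu Θ ω) else -δ ^ (4 * mu Θ ω + 1))
      = (∑ ω ∈ Tb, δ ^ (4 * mu Θ ω)) - (∑ ω ∈ Tn, δ ^ (4 * mu Θ ω + 1)) := by
    rw [← Finset.sum_filter_add_sum_filter_not T (fun ω => ω b = true)]
    rw [sub_eq_add_neg, ← Finset.sum_neg_distrib]
    congr 1
    · exact Finset.sum_congr rfl (fun ω hω => by
        rw [if_pos (Finset.mem_filter.mp hω).2])
    · refine Finset.sum_congr rfl (fun ω hω => ?_)
      have hb := (Finset.mem_filter.mp hω).2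
      rw [if_neg (by simpa using hb)]
  rw [hsplit]
  -- the maximal rank among models of S
  set M : ℕ := T.sup (mu Θ) with hM
  obtain ⟨ωs, hωsT, hωsM⟩ := Finset.exists_mem_eq_sup T hTne (mu Θ)
  have hωsM' : M = mu Θ ωs := hM.trans hωsM
  have hle_M : ∀ ω ∈ T, mu Θ ω ≤ M := fun ω hω => Finset.le_sup hω
  have hMk : M ≤ Θ.length := Finset.sup_le (fun ω _ => mu_le_length Θ ω)
  -- counting bound
  have hcardle : ∀ U : Finset (A → Bool), ((U.card : ℝ)) < δ := by
    intro U
    calc (U.card : ℝ) ≤ (N : ℝ) := by exact_mod_cast Finset.card_le_univ U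
      _ < δ := hNδ
  -- Step 3a
  have key1 : (∀ ω ∈ T, mu Θ ω = M → ω b = true) →
      0 < (∑ ω ∈ Tb, δ ^ (4 * mu Θ ω)) - (∑ ω ∈ Tn, δ ^ (4 * mu Θ ω + 1)) := by
    intro hPP
    have hωsb : ωs ∈ Tb := Finset.mem_filter.mpr ⟨hωsT, hPP ωs hωsT hωsM'.symm⟩
    have hpos : δ ^ (4 * M) ≤ ∑ ω ∈ Tb, δ ^ (4 * mu Θ ω) := by
      calc δ ^ (4 * M) = δ ^ (4 * mu Θ ωs) := by rw [hωsM']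
        _ ≤ _ := Finset.single_le_sum (f := fun ω => δ ^ (4 * mu Θ ω))
          (fun ω _ => by positivity) hωsb
    have hterm : ∀ ω ∈ Tn, δ ^ (4 * mu Θ ω + 1) * δ ≤ δ ^ (4 * M) := by
      intro ω hω
      obtain ⟨hωT, hωb⟩ := Finset.mem_filter.mp hω
      have h1 : mu Θ ω ≠ M := fun h => hωb (hPP ω hωT h)
      have h2 : mu Θ ω < M := lt_of_le_of_ne (hle_M ω hωT) h1
      rw [← pow_succ]
      exact pow_le_pow_right₀ hδ1 (by omega)
    have hneg : (∑ ω ∈ Tn, δ ^ (4 * mu Θ ω + 1)) * δ ≤ (Tn.card : ℝ) * δ ^ (4 * M) := by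
      rw [Finset.sum_mul]
      have h := Finset.sum_le_card_nsmul Tn (fun ω => δ ^ (4 * mu Θ ω + 1) * δ)
        (δ ^ (4 * M)) hterm
      simpa [nsmul_eq_mul] using h
    nlinarith [hcardle Tn, pow_pos hδ0 (4 * M), hpos, hneg, hδ0]
  -- Step 3b
  have key2 : ¬ (∀ ω ∈ T, mu Θ ω = M → ω b = true) →
      (∑ ω ∈ Tb, δ ^ (4 * mu Θ ω)) - (∑ ω ∈ Tn, δ ^ (4 * mu Θ ω + 1)) < 0 := by
    intro hPP
    push_neg at hPP
    obtain ⟨ω₀, hω₀T, hω₀M, hω₀b⟩ := hPP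
    have hω₀n : ω₀ ∈ Tn := Finset.mem_filter.mpr ⟨hω₀T, hω₀b⟩
    have hneg : δ ^ (4 * M + 1) ≤ ∑ ω ∈ Tn, δ ^ (4 * mu Θ ω + 1) := by
      calc δ ^ (4 * M + 1) = δ ^ (4 * mu Θ ω₀ + 1) := by rw [hω₀M]
        _ ≤ _ := Finset.single_le_sum (f := fun ω => δ ^ (4 * mu Θ ω + 1))
          (fun ω _ => by positivity) hω₀n
    have hterm : ∀ ω ∈ Tb, δ ^ (4 * mu Θ ω) ≤ δ ^ (4 * M) := by
      intro ω hω
      have h := hle_M ω (Finset.mem_filter.mp hω).1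
      exact pow_le_pow_right₀ hδ1 (by omega)
    have hpos : (∑ ω ∈ Tb, δ ^ (4 * mu Θ ω)) ≤ (Tb.card : ℝ) * δ ^ (4 * M) := by
      have h := Finset.sum_le_card_nsmul Tb (fun ω => δ ^ (4 * mu Θ ω)) (δ ^ (4 * M)) hterm
      simpa [nsmul_eq_mul] using h
    have h4 : δ ^ (4 * M + 1) = δ * δ ^ (4 * M) := by ring
    nlinarith [hcardle Tb, pow_pos hδ0 (4 * M), hneg, hpos]
  -- Step 4
  have key3 : rankedEntails Θ S b ↔ (∀ ω ∈ T, mu Θ ω = M → ω b = true) := by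
    constructor
    · rintro ⟨i, h1, ω₁, hs1, hS1, hb1⟩
      intro ω hωT hωM
      have hω₁T : ω₁ ∈ T := (hmemT ω₁).mpr hS1
      have hmin : min i Θ.length ≤ M :=
        le_trans ((sat_iff Θ ω₁ i).mp hs1) (hle_M ω₁ hω₁T)
      have hsat : ∀ φ ∈ Θ.take i, φ.eval ω = true := by
        apply (sat_iff Θ ω i).mpr
        rw [hωM]
        exact hmin
      exact h1 ω hsat ((hmemT ω).mp hωT)
    · intro hPP
      refine ⟨M, ?_, ?_⟩
      · intro ω hsat hSω
        have hωT : ω ∈ T := (hmemT ω).mpr hSω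
        have h1 : min M Θ.length ≤ mu Θ ω := (sat_iff Θ ω M).mp hsat
        rw [min_eq_left hMk] at h1
        exact hPP ω hωT (le_antisymm (hle_M ω hωT) h1)
      · refine ⟨ωs, ?_, (hmemT ωs).mp hωsT, hPP ωs hωsT hωsM'.symm⟩
        apply (sat_iff Θ ωs M).mpr
        exact le_trans (min_le_left _ _) hωsM'.le
  constructor
  · intro h
    refine key3.mpr ?_
    by_contra hPP
    exact absurd h (not_le.mpr (key2 hPP))
  · intro h
    exact (key1 (key3.mp h)).le
end

section
/- Let δ > N ≥ 1 be reals, and let (μᵢ)_{i∈I} and (νⱼ)_{j∈J} be finite families of natural numbers with |I| ≤ N, |J| ≤ N. Set m⁺ = max_i μᵢ (−∞ if I empty) and m⁻ = max_j νⱼ (−1 if J empty, with I nonempty). Then Σ_{i∈I} δ^{4μᵢ} ≥ Σ_{j∈J} δ^{1+4νⱼ} if and only if m⁺ > m⁻. -/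
/-- Arithmetic lemma for the ReLU-based simulation of ranked entailment:
with `δ > N ≥ 1`, `|I|, |J| ≤ N`, and (`m⁻ = -1` when `J` is empty, `I` then
being nonempty; `m⁺ = -∞` when `I` is empty),
`Σ_{i∈I} δ^{4μᵢ} ≥ Σ_{j∈J} δ^{1+4νⱼ}` iff `m⁺ > m⁻`. -/
theorem stmt_14 {ι κ : Type*} (I : Finset ι) (J : Finset κ) (μ : ι → ℕ) (ν : κ → ℕ)
    (δ N : ℝ) (hN : 1 ≤ N) (hδ : N < δ)
    (hI : (I.card : ℝ) ≤ N) (hJ : (J.card : ℝ) ≤ N)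
    (hIJ : J = ∅ → I.Nonempty) :
    (∑ j ∈ J, δ ^ (1 + 4 * ν j) ≤ ∑ i ∈ I, δ ^ (4 * μ i)) ↔
      (if J.Nonempty then J.sup (fun j => ((ν j : ℤ) : WithBot ℤ))
        else ((-1 : ℤ) : WithBot ℤ)) <
      I.sup (fun i => ((μ i : ℤ) : WithBot ℤ)) := by
  have hδ1 : 1 < δ := lt_of_le_of_lt hN hδ
  have hδ0 : 0 < δ := lt_trans one_pos hδ1
  rcases I.eq_empty_or_nonempty with hIe | hIne
  · have hJne : J.Nonempty := by
      rcases J.eq_empty_or_nonempty with h | h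
      · exact absurd (hIJ h) (by simp [hIe])
      · exact h
    have hLHS : ¬ (∑ j ∈ J, δ ^ (1 + 4 * ν j) ≤ ∑ i ∈ I, δ ^ (4 * μ i)) := by
      rw [hIe]
      simp only [Finset.sum_empty, not_le]
      exact Finset.sum_pos (fun j _ => pow_pos hδ0 _) hJne
    have hRHS : ¬ ((if J.Nonempty then J.sup (fun j => ((ν j : ℤ) : WithBot ℤ))
        else ((-1 : ℤ) : WithBot ℤ)) < I.sup (fun i => ((μ i : ℤ) : WithBot ℤ))) := by
      rw [hIe]
      simp
    exact iff_of_false hLHS hRHS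
  · obtain ⟨i₀, hi₀, hmax⟩ := I.exists_max_image μ hIne
    have hIsum : δ ^ (4 * μ i₀) ≤ ∑ i ∈ I, δ ^ (4 * μ i) :=
      Finset.single_le_sum (f := fun i => δ ^ (4 * μ i)) (fun i _ => le_of_lt (pow_pos hδ0 _)) hi₀
    have hIsup : I.sup (fun i => ((μ i : ℤ) : WithBot ℤ)) = ((μ i₀ : ℤ) : WithBot ℤ) := by
      apply le_antisymm
      · exact Finset.sup_le fun i hi => by exact_mod_cast hmax i hi
      · exact Finset.le_sup (f := fun i => ((μ i : ℤ) : WithBot ℤ)) hi₀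
    rcases J.eq_empty_or_nonempty with hJe | hJne
    · have hRHS : ((-1 : ℤ) : WithBot ℤ) < I.sup (fun i => ((μ i : ℤ) : WithBot ℤ)) := by
        rw [hIsup]
        exact_mod_cast show (-1 : ℤ) < (μ i₀ : ℤ) by omega
      rw [hJe]
      simp only [Finset.not_nonempty_empty, if_false, Finset.sum_empty]
      exact iff_of_true (Finset.sum_nonneg fun i _ => le_of_lt (pow_pos hδ0 _)) hRHS
    · obtain ⟨j₀, hj₀, hjmax⟩ := J.exists_max_image ν hJne
      have hJsup : J.sup (fun j => ((ν j : ℤ) : WithBot ℤ)) = ((ν j₀ : ℤ) : WithBot ℤ) := by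
        apply le_antisymm
        · exact Finset.sup_le fun j hj => by exact_mod_cast hjmax j hj
        · exact Finset.le_sup (f := fun j => ((ν j : ℤ) : WithBot ℤ)) hj₀
      rw [if_pos hJne, hJsup, hIsup]
      have hRHS : (((ν j₀ : ℤ) : WithBot ℤ) < ((μ i₀ : ℤ) : WithBot ℤ)) ↔ ν j₀ < μ i₀ := by
        exact_mod_cast Iff.rfl
      rw [hRHS]
      constructor
      · -- contrapositive: if μ i₀ ≤ ν j₀ then sums strictly reversed
        intro hle
        by_contra hnot
        push_neg at hnot
        have h1 : ∑ i ∈ I, δ ^ (4 * μ i) ≤ (I.card : ℝ) * δ ^ (4 * μ i₀) := by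
          have := Finset.sum_le_card_nsmul I (fun i => δ ^ (4 * μ i)) (δ ^ (4 * μ i₀))
            (fun i hi => pow_le_pow_right₀ hδ1.le (by have := hmax i hi; omega))
          simpa [nsmul_eq_mul] using this
        have h2 : (I.card : ℝ) * δ ^ (4 * μ i₀) < δ * δ ^ (4 * μ i₀) :=
          mul_lt_mul_of_pos_right (lt_of_le_of_lt hI hδ) (pow_pos hδ0 _)
        have h3 : δ * δ ^ (4 * μ i₀) = δ ^ (1 + 4 * μ i₀) := by ring
        have h4 : δ ^ (1 + 4 * μ i₀) ≤ δ ^ (1 + 4 * ν j₀) :=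
          pow_le_pow_right₀ hδ1.le (by omega)
        have h5 : δ ^ (1 + 4 * ν j₀) ≤ ∑ j ∈ J, δ ^ (1 + 4 * ν j) :=
          Finset.single_le_sum (f := fun j => δ ^ (1 + 4 * ν j)) (fun j _ => le_of_lt (pow_pos hδ0 _)) hj₀
        linarith
      · intro hlt
        have h1 : ∑ j ∈ J, δ ^ (1 + 4 * ν j) ≤ (J.card : ℝ) * δ ^ (1 + 4 * ν j₀) := by
          have := Finset.sum_le_card_nsmul J (fun j => δ ^ (1 + 4 * ν j)) (δ ^ (1 + 4 * ν j₀))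
            (fun j hj => pow_le_pow_right₀ hδ1.le (by have := hjmax j hj; omega))
          simpa [nsmul_eq_mul] using this
        have h2 : (J.card : ℝ) * δ ^ (1 + 4 * ν j₀) ≤ δ * δ ^ (1 + 4 * ν j₀) :=
          mul_le_mul_of_nonneg_right (le_of_lt (lt_of_le_of_lt hJ hδ)) (le_of_lt (pow_pos hδ0 _))
        have h3 : δ * δ ^ (1 + 4 * ν j₀) = δ ^ (2 + 4 * ν j₀) := by ring
        have h4 : δ ^ (2 + 4 * ν j₀) ≤ δ ^ (4 * μ i₀) :=
          pow_le_pow_right₀ hδ1.le (by omega)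
        linarith
end

section
/- For every stratified knowledge base Θ = (α₁,…,α_k) over a finite atom set A, there exist two families of vectors (a ↦ v_a) and (a ↦ w_a) in R^l (l = number of interpretations over A) such that for all nonempty {a₁,…,aₙ} ⊆ A and all b ∈ A: (v_{a₁} ⊙ … ⊙ v_{aₙ}) · w_b ≥ 0 if and only if Θ ⊨ a₁∧…∧aₙ ▷ b. -/
namespace Stmt15
variable {A : Type}

def mu (Θ : List (PropForm A)) (ω : A → Bool) : ℕ :=
  Nat.findGreatest (fun i => ∀ φ ∈ Θ.take i, φ.eval ω = true) Θ.length

theorem mu_le (Θ : List (PropForm A)) (ω : A → Bool) : mu Θ ω ≤ Θ.length :=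
  Nat.findGreatest_le _

theorem sat_mono (Θ : List (PropForm A)) (ω : A → Bool) {i j : ℕ} (hij : i ≤ j)
    (h : ∀ φ ∈ Θ.take j, φ.eval ω = true) : ∀ φ ∈ Θ.take i, φ.eval ω = true := by
  intro φ hφ
  apply h
  have h1 : Θ.take i = (Θ.take j).take i := by
    rw [List.take_take, min_eq_left hij]
  exact List.take_subset _ _ (h1 ▸ hφ)

theorem sat_mu (Θ : List (PropForm A)) (ω : A → Bool) :
    ∀ φ ∈ Θ.take (mu Θ ω), φ.eval ω = true :=
  Nat.findGreatest_spec (P := fun i => ∀ φ ∈ Θ.take i, φ.eval ω = true)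
    (Nat.zero_le _) (by simp)

theorem sat_iff (Θ : List (PropForm A)) (ω : A → Bool) (i : ℕ) :
    (∀ φ ∈ Θ.take i, φ.eval ω = true) ↔ min i Θ.length ≤ mu Θ ω := by
  constructor
  · intro h
    exact Nat.le_findGreatest (min_le_right _ _) (sat_mono Θ ω (min_le_left _ _) h)
  · intro h
    rcases le_or_gt i Θ.length with hik | hik
    · rw [min_eq_left hik] at h
      exact sat_mono Θ ω h (sat_mu Θ ω)
    · rw [min_eq_right hik.le] at h
      have hmu : mu Θ ω = Θ.length := le_antisymm (mu_le Θ ω) h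
      have h2 := sat_mu Θ ω
      rw [hmu, List.take_length] at h2
      rw [List.take_of_length_le hik.le]
      exact h2

end Stmt15

namespace Stmt15

theorem sum_rw {A : Type} [Fintype A] [DecidableEq A] (Θ : List (PropForm A))
    (d : ℝ) (S : Finset A) (b : A) :
    ∑ ω : A → Bool, (∏ a ∈ S, if ω a then (1:ℝ) else 0) *
      (if ω b then d ^ (2 * mu Θ ω) else -(d ^ (2 * mu Θ ω + 1))) =
    (∑ ω ∈ (Finset.univ.filter (fun ω : A → Bool => ∀ a ∈ S, ω a = true)).filter
        (fun ω => ω b = true), d ^ (2 * mu Θ ω)) -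
    ∑ ω ∈ (Finset.univ.filter (fun ω : A → Bool => ∀ a ∈ S, ω a = true)).filter
        (fun ω => ¬ ω b = true), d ^ (2 * mu Θ ω + 1) := by
  have hprod : ∀ ω : A → Bool, (∏ a ∈ S, if ω a then (1:ℝ) else 0) =
      if (∀ a ∈ S, ω a = true) then 1 else 0 := by
    intro ω
    by_cases h : ∀ a ∈ S, ω a = true
    · rw [if_pos h, Finset.prod_eq_one]
      intro a ha; rw [if_pos (h a ha)]
    · rw [if_neg h]
      push_neg at h
      obtain ⟨a, ha, hna⟩ := h
      exact Finset.prod_eq_zero ha (by simp [hna])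
  calc ∑ ω : A → Bool, (∏ a ∈ S, if ω a then (1:ℝ) else 0) *
        (if ω b then d ^ (2 * mu Θ ω) else -(d ^ (2 * mu Θ ω + 1)))
      = ∑ ω : A → Bool, if (∀ a ∈ S, ω a = true) then
          (if ω b then d ^ (2 * mu Θ ω) else -(d ^ (2 * mu Θ ω + 1))) else 0 := by
        refine Finset.sum_congr rfl (fun ω _ => ?_)
        rw [hprod ω, ite_mul, one_mul, zero_mul]
    _ = ∑ ω ∈ Finset.univ.filter (fun ω : A → Bool => ∀ a ∈ S, ω a = true),
          (if ω b then d ^ (2 * mu Θ ω) else -(d ^ (2 * mu Θ ω + 1))) :=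
        (Finset.sum_filter _ _).symm
    _ = (∑ ω ∈ (Finset.univ.filter (fun ω : A → Bool => ∀ a ∈ S, ω a = true)).filter
          (fun ω => ω b = true),
          (if ω b then d ^ (2 * mu Θ ω) else -(d ^ (2 * mu Θ ω + 1)))) +
        ∑ ω ∈ (Finset.univ.filter (fun ω : A → Bool => ∀ a ∈ S, ω a = true)).filter
          (fun ω => ¬ ω b = true),
          (if ω b then d ^ (2 * mu Θ ω) else -(d ^ (2 * mu Θ ω + 1))) :=
        (Finset.sum_filter_add_sum_filter_not _ _ _).symm
    _ = (∑ ω ∈ (Finset.univ.filter (fun ω : A → Bool => ∀ a ∈ S, ω a = true)).filter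
          (fun ω => ω b = true), d ^ (2 * mu Θ ω)) +
        ∑ ω ∈ (Finset.univ.filter (fun ω : A → Bool => ∀ a ∈ S, ω a = true)).filter
          (fun ω => ¬ ω b = true), -(d ^ (2 * mu Θ ω + 1)) := by
        congr 1
        · refine Finset.sum_congr rfl (fun ω hω => ?_)
          rw [if_pos (Finset.mem_filter.1 hω).2]
        · refine Finset.sum_congr rfl (fun ω hω => ?_)
          rw [if_neg (Finset.mem_filter.1 hω).2]
    _ = _ := by rw [Finset.sum_neg_distrib, sub_eq_add_neg]

theorem key1 {A : Type} [Fintype A] [DecidableEq A] (Θ : List (PropForm A))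
    {d : ℝ} (hd : d = (Fintype.card (A → Bool) : ℝ) + 1)
    (T1 T0 : Finset (A → Bool)) (hT1ne : T1.Nonempty) :
    ((∑ ω ∈ T0, d ^ (2 * mu Θ ω + 1)) ≤ ∑ ω ∈ T1, d ^ (2 * mu Θ ω)) ↔
      (∀ ω ∈ T0, mu Θ ω < T1.sup (mu Θ)) := by
  set μ := mu Θ with hμ
  set M1 := T1.sup μ with hM1
  have hd1 : (1 : ℝ) ≤ d := by
    have h0 : (0:ℝ) ≤ (Fintype.card (A → Bool) : ℝ) := Nat.cast_nonneg _
    rw [hd]; linarith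
  have hd0 : (0:ℝ) < d := lt_of_lt_of_le one_pos hd1
  constructor
  · intro hle ω₀ hω₀
    by_contra hcon
    push_neg at hcon
    have hP : ∑ ω ∈ T1, d ^ (2 * μ ω) ≤ (T1.card : ℝ) * d ^ (2 * M1) := by
      have h := Finset.sum_le_card_nsmul T1 (fun ω => d ^ (2 * μ ω)) (d ^ (2 * M1))
        (fun ω hω => pow_le_pow_right₀ hd1
          (by have := Finset.le_sup (f := μ) hω; omega))
      simpa [nsmul_eq_mul] using h
    have hcard : (T1.card : ℝ) ≤ (Fintype.card (A → Bool) : ℝ) :=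
      Nat.cast_le.2 (Finset.card_le_univ _)
    have hstep : d ^ (2 * M1 + 1) ≤ d ^ (2 * μ ω₀ + 1) :=
      pow_le_pow_right₀ hd1 (by omega)
    have hN : d ^ (2 * M1 + 1) ≤ ∑ ω ∈ T0, d ^ (2 * μ ω + 1) :=
      hstep.trans (Finset.single_le_sum (f := fun ω => d ^ (2 * μ ω + 1))
        (fun ω _ => by positivity) hω₀)
    have hcd : (Fintype.card (A → Bool) : ℝ) < d := by rw [hd]; linarith
    have hlt : (Fintype.card (A → Bool) : ℝ) * d ^ (2 * M1) < d ^ (2 * M1 + 1) := by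
      rw [pow_succ]
      have hp : (0:ℝ) < d ^ (2 * M1) := by positivity
      nlinarith [hp, hcd]
    have hPow : (0:ℝ) ≤ d ^ (2 * M1) := by positivity
    nlinarith
  · intro hR
    rcases T0.eq_empty_or_nonempty with h0 | ⟨ω₀, hω₀⟩
    · rw [h0, Finset.sum_empty]
      exact Finset.sum_nonneg (fun ω _ => by positivity)
    · have hM1pos : 1 ≤ M1 := by have := hR ω₀ hω₀; omega
      obtain ⟨m, hm⟩ : ∃ m, M1 = m + 1 := ⟨M1 - 1, by omega⟩
      have hN : ∑ ω ∈ T0, d ^ (2 * μ ω + 1) ≤ (T0.card : ℝ) * d ^ (2 * m + 1) := by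
        have h := Finset.sum_le_card_nsmul T0 (fun ω => d ^ (2 * μ ω + 1)) (d ^ (2 * m + 1))
          (fun ω hω => pow_le_pow_right₀ hd1 (by have := hR ω hω; omega))
        simpa [nsmul_eq_mul] using h
      have hcard : (T0.card : ℝ) ≤ (Fintype.card (A → Bool) : ℝ) :=
        Nat.cast_le.2 (Finset.card_le_univ _)
      have hP : d ^ (2 * M1) ≤ ∑ ω ∈ T1, d ^ (2 * μ ω) := by
        obtain ⟨ω₁, hω₁, hsup⟩ := Finset.exists_mem_eq_sup T1 hT1ne μ
        have hterm : d ^ (2 * M1) = d ^ (2 * μ ω₁) := by rw [hM1, hsup]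
        exact hterm ▸ Finset.single_le_sum (f := fun ω => d ^ (2 * μ ω))
          (fun ω _ => by positivity) hω₁
      have hcd : (Fintype.card (A → Bool) : ℝ) < d := by rw [hd]; linarith
      have hp : (0:ℝ) < d ^ (2 * m + 1) := by positivity
      have hlt : (Fintype.card (A → Bool) : ℝ) * d ^ (2 * m + 1) < d ^ (2 * M1) := by
        have h2 : 2 * M1 = (2 * m + 1) + 1 := by omega
        have he : d ^ (2 * M1) = d * d ^ (2 * m + 1) := by rw [h2, pow_succ']
        rw [he]
        exact mul_lt_mul_of_pos_right hcd hp
      have hp0 : (0:ℝ) < d ^ (2 * m + 1) := by positivity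
      nlinarith

end Stmt15

namespace Stmt15

theorem key2 {A : Type} [Fintype A] [DecidableEq A] (Θ : List (PropForm A))
    (S : Finset A) (b : A) :
    (∀ ω ∈ (Finset.univ.filter (fun ω : A → Bool => ∀ a ∈ S, ω a = true)).filter
        (fun ω => ¬ ω b = true),
      mu Θ ω < ((Finset.univ.filter (fun ω : A → Bool => ∀ a ∈ S, ω a = true)).filter
        (fun ω => ω b = true)).sup (mu Θ)) ↔ rankedEntails Θ S b := by
  set μ := mu Θ with hμ
  set T1 : Finset (A → Bool) :=
    (Finset.univ.filter (fun ω : A → Bool => ∀ a ∈ S, ω a = true)).filter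
      (fun ω => ω b = true) with hT1
  set T0 : Finset (A → Bool) :=
    (Finset.univ.filter (fun ω : A → Bool => ∀ a ∈ S, ω a = true)).filter
      (fun ω => ¬ ω b = true) with hT0
  have memT1 : ∀ ω, ω ∈ T1 ↔ (∀ a ∈ S, ω a = true) ∧ ω b = true := by
    intro ω; rw [hT1]; simp
  have memT0 : ∀ ω, ω ∈ T0 ↔ (∀ a ∈ S, ω a = true) ∧ ω b = false := by
    intro ω; rw [hT0]; simp
  have hT1ne : T1.Nonempty := ⟨fun _ => true, (memT1 _).2 ⟨fun _ _ => rfl, rfl⟩⟩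
  set M1 := T1.sup μ with hM1
  set k := Θ.length with hk
  constructor
  · intro hR
    refine ⟨M1, ?_, ?_⟩
    · intro ω hsat hωS
      have hmin : min M1 k ≤ μ ω := (Stmt15.sat_iff Θ ω M1).1 hsat
      have hM1k : M1 ≤ k := Finset.sup_le (fun ω _ => Stmt15.mu_le Θ ω)
      rw [min_eq_left hM1k] at hmin
      by_contra hb
      have hω0 : ω ∈ T0 := (memT0 ω).2 ⟨hωS, by simpa using hb⟩
      have := hR ω hω0
      omega
    · obtain ⟨ω₁, hω₁, hsup⟩ := Finset.exists_mem_eq_sup T1 hT1ne μ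
      obtain ⟨hωS, hωb⟩ := (memT1 ω₁).1 hω₁
      refine ⟨ω₁, ?_, hωS, hωb⟩
      apply (Stmt15.sat_iff Θ ω₁ M1).2
      calc min M1 k ≤ M1 := min_le_left _ _
        _ = μ ω₁ := by rw [hM1, hsup]
  · rintro ⟨i, h1, h2⟩ ω₀ hω₀
    obtain ⟨ω₁, hs1, hS1, hb1⟩ := h2
    have hi1 : min i k ≤ μ ω₁ := (Stmt15.sat_iff Θ ω₁ i).1 hs1
    have hω1T1 : ω₁ ∈ T1 := (memT1 ω₁).2 ⟨hS1, hb1⟩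
    have hle1 : μ ω₁ ≤ M1 := by rw [hM1]; exact Finset.le_sup hω1T1
    obtain ⟨hS0, hb0⟩ := (memT0 ω₀).1 hω₀
    have h0 : ¬ (min i k ≤ μ ω₀) := by
      intro hc
      have hcon := h1 ω₀ ((Stmt15.sat_iff Θ ω₀ i).2 hc) hS0
      rw [hb0] at hcon
      exact Bool.false_ne_true hcon
    omega

end Stmt15

/-- Hadamard-product embeddings can simulate ranked non-monotonic entailment:
two families of vectors indexed by the `l = 2^{|A|}` interpretations over `A`
exist such that `(v_{a₁} ⊙ ... ⊙ v_{aₙ}) · w_b ≥ 0` iff `Θ ⊨ a₁∧...∧aₙ ▷ b`. -/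
theorem stmt_15 {A : Type} [Fintype A] [DecidableEq A] (Θ : List (PropForm A)) :
    ∃ (v w : A → (A → Bool) → ℝ),
      ∀ S : Finset A, S.Nonempty → ∀ b : A,
        (0 ≤ ∑ ω : A → Bool, (∏ a ∈ S, v a ω) * w b ω) ↔
          rankedEntails Θ S b := by
  refine ⟨fun a ω => if ω a then 1 else 0,
    fun b ω => if ω b then ((Fintype.card (A → Bool) : ℝ) + 1) ^ (2 * Stmt15.mu Θ ω)
      else -(((Fintype.card (A → Bool) : ℝ) + 1) ^ (2 * Stmt15.mu Θ ω + 1)), ?_⟩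
  intro S hS b
  rw [show ∑ ω : A → Bool,
      (∏ a ∈ S, (fun (a : A) (ω : A → Bool) => if ω a then (1:ℝ) else 0) a ω) *
      (fun (b : A) (ω : A → Bool) =>
        if ω b then ((Fintype.card (A → Bool) : ℝ) + 1) ^ (2 * Stmt15.mu Θ ω)
        else -(((Fintype.card (A → Bool) : ℝ) + 1) ^ (2 * Stmt15.mu Θ ω + 1))) b ω =
      ∑ ω : A → Bool, (∏ a ∈ S, if ω a then (1:ℝ) else 0) *
      (if ω b then ((Fintype.card (A → Bool) : ℝ) + 1) ^ (2 * Stmt15.mu Θ ω)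
        else -(((Fintype.card (A → Bool) : ℝ) + 1) ^ (2 * Stmt15.mu Θ ω + 1))) from rfl]
  rw [Stmt15.sum_rw Θ ((Fintype.card (A → Bool) : ℝ) + 1) S b, sub_nonneg,
    Stmt15.key1 Θ rfl _ _
      ⟨fun _ => true, by simp⟩]
  exact Stmt15.key2 Θ S b
end
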